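/- Let Q be a labelled quiver with labels X and let F ⊆ R⟨X⟩_Q. If G ⊆ R⟨X⟩_Q is a set of Q-consequences of F, then every Q-consequence of G is also a Q-consequence of F. -/

import Mathlib

open scoped BigOperators

/-- The free `R`-algebra `R⟨X⟩` on `X`, as the monoid algebra over `R`
of the free monoid `⟨X⟩` of words over `X`. -/
abbrev FreeAlg (R X : Type*) [CommRing R] := MonoidAlgebra R (FreeMonoid X)

/-- A labelled quiver `Q = (V, E, X, s, t, l)`: a directed multigraph with vertex set `V`,
edge set `E`, source and target maps `s, t : E → V` and labelling `l : E → X`. -/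
structure LabelledQuiver (V E X : Type*) where
  src : E → V
  tgt : E → V
  lab : E → X

/-- Paths in a labelled quiver `Q`; `LQPath Q u w` is the type of paths with source `u` and
target `w`.  `nil v` is the empty path at `v`; `cons e p` appends the edge `e` after `p`. -/
inductive LQPath {V E X : Type*} (Q : LabelledQuiver V E X) : V → V → Type _ where
  | nil (v : V) : LQPath Q v v
  | cons {u : V} (e : E) (p : LQPath Q u (Q.src e)) : LQPath Q u (Q.tgt e)

namespace LQPath
variable {V E X : Type*} {Q : LabelledQuiver V E X}
/-- The label `l(p) = l(eₙ)⋯l(e₁) ∈ ⟨X⟩` of a path; the empty path has label `1`. -/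
def label : {u w : V} → LQPath Q u w → FreeMonoid X
  | _, _, .nil _ => 1
  | _, _, .cons e p => FreeMonoid.of (Q.lab e) * p.label
end LQPath

namespace LabelledQuiver

variable {V E X : Type*} (Q : LabelledQuiver V E X)

/-- The set of signatures `σ(m) = {(s(p), t(p)) : p a path in Q with l(p) = m}`. -/
def sigmaM (m : FreeMonoid X) : Set (V × V) :=
  {vw | ∃ p : LQPath Q vw.1 vw.2, p.label = m}

variable {R : Type*} [CommRing R]

/-- The set of signatures `σ(f) = ⋂_{m ∈ supp(f)} σ(m)` of a polynomial. -/
def sigmaP (f : FreeAlg R X) : Set (V × V) :=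
  ⋂ m ∈ f.coeff.support, Q.sigmaM m

/-- `f` is compatible with `Q` if `σ(f) ≠ ∅`. -/
def Compatible (f : FreeAlg R X) : Prop :=
  (Q.sigmaP f).Nonempty

/-- `f` is uniformly compatible with `Q` if it is compatible and all monomials in its
support have the same set of signatures. -/
def UniformlyCompatible (f : FreeAlg R X) : Prop :=
  Q.Compatible f ∧
    ∀ m ∈ f.coeff.support, ∀ m' ∈ f.coeff.support,
      Q.sigmaM m = Q.sigmaM m'

/-- The set of sources `s(f)` of a polynomial: the projection of `σ(f)` to the first
component. -/
def srcSet (f : FreeAlg R X) : Set V := Prod.fst '' Q.sigmaP f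

/-- The set of targets `t(f)` of a polynomial: the projection of `σ(f)` to the second
component. -/
def tgtSet (f : FreeAlg R X) : Set V := Prod.snd '' Q.sigmaP f

end LabelledQuiver

/-- `f` is a `Q`-consequence of `F`: `f` is compatible with `Q` and there are finitely many
uniformly compatible `aᵢ, bᵢ` and `fᵢ ∈ F` with `f = Σᵢ aᵢ·fᵢ·bᵢ` where each summand
satisfies `σ(aᵢ·fᵢ·bᵢ) ⊇ σ(f)`. -/
def LabelledQuiver.QConsequence {V E X R : Type*} [CommRing R] (Q : LabelledQuiver V E X)
    (F : Set (FreeAlg R X)) (f : FreeAlg R X) : Prop :=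
  Q.Compatible f ∧
    ∃ (n : ℕ) (a b g : Fin n → FreeAlg R X),
      (∀ i, Q.UniformlyCompatible (a i)) ∧ (∀ i, Q.UniformlyCompatible (b i)) ∧
      (∀ i, g i ∈ F) ∧ f = ∑ i, a i * g i * b i ∧
      ∀ i, Q.sigmaP f ⊆ Q.sigmaP (a i * g i * b i)


namespace LQPath
variable {V E X : Type*} {Q : LabelledQuiver V E X}
def comp : {u w z : V} → LQPath Q u w → LQPath Q w z → LQPath Q u z
  | _, _, _, p, .nil _ => p
  | _, _, _, p, .cons e q => .cons e (p.comp q)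
theorem label_comp : ∀ {u w z : V} (p : LQPath Q u w) (q : LQPath Q w z),
    (p.comp q).label = q.label * p.label
  | _, _, _, p, .nil _ => by simp [comp, label]
  | _, _, _, p, .cons e q => by simp [comp, label, label_comp p q, mul_assoc]
theorem split (mL : List X) : ∀ (m' : FreeMonoid X) {u z : V} (p : LQPath Q u z),
    p.label = FreeMonoid.ofList mL * m' →
    ∃ (w : V) (p1 : LQPath Q u w) (p2 : LQPath Q w z),
      p1.label = m' ∧ p2.label = FreeMonoid.ofList mL := by
  induction mL with
  | nil =>
      intro m' u z p hp
      exact ⟨z, p, .nil z, by simpa using hp, by simp [label]⟩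
  | cons x m0 ih =>
      intro m' u z p hp
      cases p with
      | nil =>
          exfalso
          have := congrArg FreeMonoid.toList hp
          simp [label] at this
      | cons e q =>
          have hlist := congrArg FreeMonoid.toList hp
          simp [label] at hlist
          obtain ⟨hx, hq⟩ := hlist
          have hq' : q.label = FreeMonoid.ofList m0 * m' := by
            apply FreeMonoid.toList.injective
            simpa using hq
          obtain ⟨w, p1, p2, h1, h2⟩ := ih m' q hq'
          refine ⟨w, p1, .cons e p2, h1, ?_⟩
          apply FreeMonoid.toList.injective
          simp [label, h2, hx]
end LQPath

/-- relation composition on signatures -/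
def sComp {V : Type*} (A B : Set (V × V)) : Set (V × V) :=
  {vw | ∃ w, (vw.1, w) ∈ B ∧ (w, vw.2) ∈ A}

theorem sComp_assoc {V : Type*} (A B C : Set (V × V)) :
    sComp (sComp A B) C = sComp A (sComp B C) := by
  ext ⟨u, z⟩
  constructor
  · rintro ⟨w, hw, w2, h2, h3⟩
    exact ⟨w2, ⟨w, hw, h2⟩, h3⟩
  · rintro ⟨w, ⟨w2, h2, h3⟩, h4⟩
    exact ⟨w2, h2, w, h3, h4⟩

theorem sComp_mono {V : Type*} {A A' B B' : Set (V × V)} (hA : A ⊆ A') (hB : B ⊆ B') :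
    sComp A B ⊆ sComp A' B' := by
  rintro ⟨u, z⟩ ⟨w, h1, h2⟩
  exact ⟨w, hB h1, hA h2⟩

namespace LabelledQuiver
variable {V E X : Type*} (Q : LabelledQuiver V E X)

theorem sigmaM_mul (m m' : FreeMonoid X) :
    Q.sigmaM (m * m') = sComp (Q.sigmaM m) (Q.sigmaM m') := by
  ext ⟨u, z⟩
  constructor
  · rintro ⟨p, hp⟩
    obtain ⟨w, p1, p2, h1, h2⟩ := LQPath.split (FreeMonoid.toList m) m' p (by simpa using hp)
    exact ⟨w, ⟨p1, h1⟩, ⟨p2, by simpa using h2⟩⟩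
  · rintro ⟨w, ⟨p1, h1⟩, p2, h2⟩
    exact ⟨p1.comp p2, by simp [LQPath.label_comp, h1, h2]⟩

variable {R : Type*} [CommRing R]

/-- `f` has uniform signature value `A`. -/
def UVal (A : Set (V × V)) (f : FreeAlg R X) : Prop :=
  ∀ m ∈ f.coeff.support, Q.sigmaM m = A

theorem UVal.mul {A C : Set (V × V)} {a c : FreeAlg R X}
    (ha : Q.UVal A a) (hc : Q.UVal C c) : Q.UVal (sComp A C) (a * c) := by
  classical
  intro m hm
  have hmem := MonoidAlgebra.support_coeff_mul_subset a c hm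
  rw [Finset.mem_mul] at hmem
  obtain ⟨m1, hm1, m2, hm2, rfl⟩ := hmem
  rw [Q.sigmaM_mul, ha m1 hm1, hc m2 hm2]

theorem UVal.le_sigmaP {A : Set (V × V)} {f : FreeAlg R X} (h : Q.UVal A f) :
    A ⊆ Q.sigmaP f :=
  Set.subset_iInter₂ fun m hm => (h m hm).symm.le

theorem UVal.sigmaP_le {A : Set (V × V)} {f : FreeAlg R X} (h : Q.UVal A f) (hf : f ≠ 0) :
    Q.sigmaP f ⊆ A := by
  obtain ⟨m, hm⟩ := Finsupp.support_nonempty_iff.2 (MonoidAlgebra.coeff_eq_zero.not.2 hf)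
  exact (Set.biInter_subset_of_mem hm).trans (h m hm).le

theorem uval_exists {f : FreeAlg R X} (h : Q.UniformlyCompatible f) :
    ∃ A, Q.UVal A f := by
  by_cases hf : f = 0
  · exact ⟨Set.univ, fun m hm => by simp [hf] at hm⟩
  · obtain ⟨m0, hm0⟩ := Finsupp.support_nonempty_iff.2 (MonoidAlgebra.coeff_eq_zero.not.2 hf)
    exact ⟨Q.sigmaM m0, fun m hm => h.2 m hm m0 hm0⟩

theorem sigmaP_zero : Q.sigmaP (0 : FreeAlg R X) = Set.univ := by
  simp [LabelledQuiver.sigmaP]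

theorem uc_zero (hV : Nonempty V) : Q.UniformlyCompatible (0 : FreeAlg R X) := by
  refine ⟨?_, by simp⟩
  rw [LabelledQuiver.Compatible, Q.sigmaP_zero]
  obtain ⟨v⟩ := hV
  exact ⟨(v, v), trivial⟩

theorem uc_of_uval {A : Set (V × V)} {f : FreeAlg R X} (h : Q.UVal A f) (hA : A.Nonempty) :
    Q.UniformlyCompatible f := by
  refine ⟨hA.mono (h.le_sigmaP Q), fun m hm m' hm' => by rw [h m hm, h m' hm']⟩

end LabelledQuiver

theorem qConsequence_of_fintype' {R V E X : Type*} [CommRing R] (Q : LabelledQuiver V E X)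
    (F : Set (FreeAlg R X)) (f : FreeAlg R X) {ι : Type} [Fintype ι]
    (a b g : ι → FreeAlg R X) (hcomp : Q.Compatible f)
    (ha : ∀ i, Q.UniformlyCompatible (a i)) (hb : ∀ i, Q.UniformlyCompatible (b i))
    (hg : ∀ i, g i ∈ F) (hsum : f = ∑ i, a i * g i * b i)
    (hσ : ∀ i, Q.sigmaP f ⊆ Q.sigmaP (a i * g i * b i)) : Q.QConsequence F f := by
  refine ⟨hcomp, Fintype.card ι, a ∘ (Fintype.equivFin ι).symm, b ∘ (Fintype.equivFin ι).symm,
    g ∘ (Fintype.equivFin ι).symm, fun i => ha _, fun i => hb _, fun i => hg _, ?_, fun i => hσ _⟩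
  rw [hsum]
  exact (Equiv.sum_comp (Fintype.equivFin ι).symm fun i => a i * g i * b i).symm


/-- If all elements of `F` and `G` are uniformly compatible with `Q` and every
element of `G` is a `Q`-consequence of `F`, then every `Q`-consequence of `G` is also a
`Q`-consequence of `F`. -/
theorem qConsequence_trans {R V E X : Type*} [CommRing R] (Q : LabelledQuiver V E X)
    (F G : Set (FreeAlg R X)) (hF : ∀ g ∈ F, Q.UniformlyCompatible g)
    (hG : ∀ g ∈ G, Q.UniformlyCompatible g)
    (hGF : ∀ g ∈ G, Q.QConsequence F g) (f : FreeAlg R X) (hf : Q.QConsequence G f) :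
    Q.QConsequence F f := by
  classical
  obtain ⟨hcf, n, a, b, g, ha, hb, hgG, hsum, hσ⟩ := hf
  choose nn c d h hc hd hhF hgsum hgσ using fun i => (hGF (g i) (hgG i)).2
  obtain ⟨⟨v0, v0'⟩, hv0⟩ := hcf
  have hV : Nonempty V := ⟨v0⟩
  have hcf : Q.Compatible f := ⟨(v0, v0'), hv0⟩
  -- index type
  set ι : Type := (i : Fin n) × Fin (nn i) with hι
  -- the zero-flag
  set P : ι → Prop := fun x =>
    a x.1 * g x.1 * b x.1 = 0 ∨ c x.1 x.2 * h x.1 x.2 * d x.1 x.2 = 0 with hP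
  set A : ι → FreeAlg R X := fun x => if P x then 0 else a x.1 * c x.1 x.2 with hA
  set B : ι → FreeAlg R X := fun x => if P x then 0 else d x.1 x.2 * b x.1 with hB
  set Gm : ι → FreeAlg R X := fun x => h x.1 x.2 with hGm
  -- main per-index facts
  have key : ∀ x : ι, Q.UniformlyCompatible (A x) ∧ Q.UniformlyCompatible (B x) ∧
      Q.sigmaP f ⊆ Q.sigmaP (A x * Gm x * B x) := by
    rintro ⟨i, j⟩
    by_cases hPx : P ⟨i, j⟩
    · have hA0 : A ⟨i, j⟩ = 0 := by simp [hA, hPx]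
      have hB0 : B ⟨i, j⟩ = 0 := by simp [hB, hPx]
      refine ⟨hA0 ▸ Q.uc_zero hV, hB0 ▸ Q.uc_zero hV, ?_⟩
      rw [hA0, hB0]
      simp [Q.sigmaP_zero]
    · have habg : a i * g i * b i ≠ 0 := fun h0 => hPx (Or.inl h0)
      have hchd : c i j * h i j * d i j ≠ 0 := fun h0 => hPx (Or.inr h0)
      have hAeq : A ⟨i, j⟩ = a i * c i j := by simp only [hA]; exact if_neg hPx
      have hBeq : B ⟨i, j⟩ = d i j * b i := by simp only [hB]; exact if_neg hPx
      -- nonzero factors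
      have hai : a i ≠ 0 := fun h0 => habg (by rw [h0]; simp)
      have hgi : g i ≠ 0 := fun h0 => habg (by rw [h0]; simp)
      have hbi : b i ≠ 0 := fun h0 => habg (by rw [h0]; simp)
      have hci : c i j ≠ 0 := fun h0 => hchd (by rw [h0]; simp)
      have hhi : h i j ≠ 0 := fun h0 => hchd (by rw [h0]; simp)
      have hdi : d i j ≠ 0 := fun h0 => hchd (by rw [h0]; simp)
      -- uniform values
      obtain ⟨Av, hAv⟩ := Q.uval_exists (ha i)
      obtain ⟨Gv, hGv⟩ := Q.uval_exists (hG (g i) (hgG i))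
      obtain ⟨Bv, hBv⟩ := Q.uval_exists (hb i)
      obtain ⟨Cv, hCv⟩ := Q.uval_exists (hc i j)
      obtain ⟨Hv, hHv⟩ := Q.uval_exists (hF (h i j) (hhF i j))
      obtain ⟨Dv, hDv⟩ := Q.uval_exists (hd i j)
      -- σP f ⊆ σ(a g b)-value
      have k1 : Q.sigmaP f ⊆ sComp (sComp Av Gv) Bv :=
        (hσ i).trans (((hAv.mul Q hGv).mul Q hBv).sigmaP_le Q habg)
      have k2 : Gv ⊆ sComp (sComp Cv Hv) Dv := by
        have : Q.sigmaP (g i) ⊆ sComp (sComp Cv Hv) Dv :=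
          (hgσ i j).trans (((hCv.mul Q hHv).mul Q hDv).sigmaP_le Q hchd)
        exact (hGv.le_sigmaP Q).trans this
      have k3 : Q.sigmaP f ⊆ sComp (sComp Av Cv) (sComp Hv (sComp Dv Bv)) := by
        refine k1.trans ?_
        refine (sComp_mono (sComp_mono (subset_refl Av) k2) (subset_refl Bv)).trans ?_
        simp only [sComp_assoc]
        exact subset_rfl
      -- value of the term
      have hterm : Q.UVal (sComp (sComp Av Cv) (sComp Hv (sComp Dv Bv)))
          (A ⟨i, j⟩ * Gm ⟨i, j⟩ * B ⟨i, j⟩) := by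
        rw [hAeq, hBeq]
        have := ((hAv.mul Q hCv).mul Q hHv).mul Q (hDv.mul Q hBv)
        simpa only [sComp_assoc, hGm] using this
      -- nonemptiness for compatibility
      obtain ⟨⟨u, z⟩, hu⟩ : (Q.sigmaP f).Nonempty := hcf
      obtain ⟨w1, hw1, hw2⟩ := k3 hu
      obtain ⟨w3, hw3, hw4⟩ := hw1
      refine ⟨?_, ?_, k3.trans (hterm.le_sigmaP Q)⟩
      · rw [hAeq]
        exact Q.uc_of_uval (hAv.mul Q hCv) ⟨(w1, z), hw2⟩
      · rw [hBeq]
        exact Q.uc_of_uval (hDv.mul Q hBv) ⟨(u, w3), hw3⟩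
  -- the sum identity
  have hsum' : f = ∑ x : ι, A x * Gm x * B x := by
    rw [hsum, ← Finset.univ_sigma_univ, Finset.sum_sigma]
    refine Finset.sum_congr rfl fun i _ => ?_
    by_cases habg : a i * g i * b i = 0
    · have : ∀ j, A ⟨i, j⟩ * Gm ⟨i, j⟩ * B ⟨i, j⟩ = 0 := by
        intro j
        have : P ⟨i, j⟩ := Or.inl habg
        simp [hA, hB, this]
      rw [habg]
      simp [this]
    · have step : ∀ j, A ⟨i, j⟩ * Gm ⟨i, j⟩ * B ⟨i, j⟩ =
          a i * (c i j * h i j * d i j) * b i := by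
        intro j
        by_cases hchd : c i j * h i j * d i j = 0
        · have hPx : P ⟨i, j⟩ := Or.inr hchd
          simp [hA, hB, hPx, hchd]
        · have hPx : ¬ P ⟨i, j⟩ := fun hor => hor.elim habg hchd
          simp only [hA, hB, hGm, if_neg hPx]
          noncomm_ring
      simp only [step]
      rw [← Finset.sum_mul, ← Finset.mul_sum, ← hgsum i]
  exact qConsequence_of_fintype' Q F f A B Gm hcf (fun x => (key x).1) (fun x => (key x).2.1)
    (fun x => hhF x.1 x.2) hsum' (fun x => (key x).2.2)
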